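/- arXiv:1511.07166 — 2 statements merged into one kernel-verified Lean document; each statement's English description precedes it below -/
import Mathlib

section
/- For all integers λ₁, λ₂: H0(λ₁,λ₂) ≠ 0 if and only if λ₁ ≥ 0 and λ₁ + λ₂ ≥ 0; H1(λ₁,λ₂) ≠ 0 if and only if λ₁ ≤ −2 and λ₂ ≥ 1; H2(λ₁,λ₂) ≠ 0 if and only if λ₁ ≥ 0 and λ₂ ≤ −3; H3(λ₁,λ₂) ≠ 0 if and only if λ₁ ≤ −2 and λ₁ + λ₂ ≤ −4. -/
open Finset

/-- C₂(n) = C(max(n,0), 2), i.e. n(n−1)/2 for n ≥ 2 and 0 for n ≤ 1. -/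
def C2 (n : ℤ) : ℤ := (n.toNat.choose 2 : ℤ)

/-- h⁰(F, O_F(λ₁ξ + λ₂f)) on the del Pezzo threefold F of degree 7. -/
def H0 (l1 l2 : ℤ) : ℤ :=
  if 0 ≤ l1 then ∑ j ∈ Finset.range (l1.toNat + 1), C2 (l1 + l2 - (j : ℤ) + 2) else 0

/-- h¹(F, O_F(λ₁ξ + λ₂f)) on the del Pezzo threefold F of degree 7. -/
def H1 (l1 l2 : ℤ) : ℤ :=
  if l1 ≤ -2 then ∑ j ∈ Finset.range ((-l1 - 2).toNat + 1), C2 (l1 + l2 + (j : ℤ) + 3) else 0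

/-- h²(F, O_F(λ₁ξ + λ₂f)) on the del Pezzo threefold F of degree 7. -/
def H2 (l1 l2 : ℤ) : ℤ :=
  if 0 ≤ l1 then ∑ j ∈ Finset.range (l1.toNat + 1), C2 (-l1 - l2 + (j : ℤ) - 1) else 0

/-- h³(F, O_F(λ₁ξ + λ₂f)) on the del Pezzo threefold F of degree 7. -/
def H3 (l1 l2 : ℤ) : ℤ :=
  if l1 ≤ -2 then ∑ j ∈ Finset.range ((-l1 - 2).toNat + 1), C2 (-l1 - l2 - (j : ℤ) - 2) else 0

lemma C2_nonneg (n : ℤ) : 0 ≤ C2 n := Int.natCast_nonneg _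

lemma C2_ne_zero_iff (n : ℤ) : C2 n ≠ 0 ↔ 2 ≤ n := by
  simp [C2, Nat.choose_eq_zero_iff]
  omega

theorem line_bundle_cohomology_nonvanishing (l1 l2 : ℤ) :
    (H0 l1 l2 ≠ 0 ↔ 0 ≤ l1 ∧ 0 ≤ l1 + l2) ∧
    (H1 l1 l2 ≠ 0 ↔ l1 ≤ -2 ∧ 1 ≤ l2) ∧
    (H2 l1 l2 ≠ 0 ↔ 0 ≤ l1 ∧ l2 ≤ -3) ∧
    (H3 l1 l2 ≠ 0 ↔ l1 ≤ -2 ∧ l1 + l2 ≤ -4) := by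
  refine ⟨?_, ?_, ?_, ?_⟩
  · unfold H0
    split_ifs with h1
    · rw [Ne, Finset.sum_eq_zero_iff_of_nonneg (fun j _ => C2_nonneg _)]
      simp only [Finset.mem_range, not_forall]
      constructor
      · rintro ⟨j, hj, hne⟩
        replace hne := (C2_ne_zero_iff _).mp hne
        exact ⟨h1, by omega⟩
      · rintro ⟨-, h2⟩
        exact ⟨0, by omega, (C2_ne_zero_iff _).mpr (by push_cast; omega)⟩
    · simp; omega
  · unfold H1
    split_ifs with h1
    · rw [Ne, Finset.sum_eq_zero_iff_of_nonneg (fun j _ => C2_nonneg _)]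
      simp only [Finset.mem_range, not_forall]
      constructor
      · rintro ⟨j, hj, hne⟩
        replace hne := (C2_ne_zero_iff _).mp hne
        exact ⟨h1, by omega⟩
      · rintro ⟨-, h2⟩
        exact ⟨(-l1 - 2).toNat, by omega, (C2_ne_zero_iff _).mpr (by omega)⟩
    · simp; omega
  · unfold H2
    split_ifs with h1
    · rw [Ne, Finset.sum_eq_zero_iff_of_nonneg (fun j _ => C2_nonneg _)]
      simp only [Finset.mem_range, not_forall]
      constructor
      · rintro ⟨j, hj, hne⟩
        replace hne := (C2_ne_zero_iff _).mp hne
        exact ⟨h1, by omega⟩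
      · rintro ⟨-, h2⟩
        exact ⟨l1.toNat, by omega, (C2_ne_zero_iff _).mpr (by omega)⟩
    · simp; omega
  · unfold H3
    split_ifs with h1
    · rw [Ne, Finset.sum_eq_zero_iff_of_nonneg (fun j _ => C2_nonneg _)]
      simp only [Finset.mem_range, not_forall]
      constructor
      · rintro ⟨j, hj, hne⟩
        replace hne := (C2_ne_zero_iff _).mp hne
        exact ⟨h1, by omega⟩
      · rintro ⟨-, h2⟩
        exact ⟨0, by omega, (C2_ne_zero_iff _).mpr (by push_cast; omega)⟩
    · simp; omega
end

section
/- The set of pairs of integers (λ₁, λ₂) satisfying all of: H0(λ₁,λ₂) ≠ 0, H0(λ₁−1,λ₂−1) = 0, and H1(λ₁+t,λ₂+t) = 0 and H2(λ₁+t,λ₂+t) = 0 for every integer t, is exactly {(0,0), (0,1), (0,2), (1,0), (1,−1)}. -/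
open Finset

lemma C2_eq_zero_iff (n : ℤ) : C2 n = 0 ↔ n ≤ 1 := by
  unfold C2
  rw [Nat.cast_eq_zero, Nat.choose_eq_zero_iff]
  omega

lemma H0_eq_zero_iff (l1 l2 : ℤ) : H0 l1 l2 = 0 ↔ l1 < 0 ∨ l1 + l2 < 0 := by
  unfold H0
  split_ifs with h
  · rw [Finset.sum_eq_zero_iff_of_nonneg (fun j _ => C2_nonneg _)]
    constructor
    · intro hall
      have h0 := hall 0 (Finset.mem_range.mpr (Nat.succ_pos _))
      rw [C2_eq_zero_iff] at h0
      push_cast at h0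
      omega
    · intro hor j hj
      rw [C2_eq_zero_iff]
      have hj' : (0:ℤ) ≤ (j:ℤ) := Int.natCast_nonneg _
      omega
  · simp only [eq_self_iff_true, true_iff]
    omega

lemma H1_eq_zero_iff (l1 l2 : ℤ) : H1 l1 l2 = 0 ↔ -2 < l1 ∨ l2 ≤ 0 := by
  unfold H1
  split_ifs with h
  · rw [Finset.sum_eq_zero_iff_of_nonneg (fun j _ => C2_nonneg _)]
    constructor
    · intro hall
      have h0 := hall (-l1 - 2).toNat (Finset.mem_range.mpr (Nat.lt_succ_self _))
      rw [C2_eq_zero_iff] at h0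
      omega
    · intro hor j hj
      rw [Finset.mem_range] at hj
      rw [C2_eq_zero_iff]
      omega
  · simp only [eq_self_iff_true, true_iff]
    omega

lemma H2_eq_zero_iff (l1 l2 : ℤ) : H2 l1 l2 = 0 ↔ l1 < 0 ∨ -2 ≤ l2 := by
  unfold H2
  split_ifs with h
  · rw [Finset.sum_eq_zero_iff_of_nonneg (fun j _ => C2_nonneg _)]
    constructor
    · intro hall
      have h0 := hall l1.toNat (Finset.mem_range.mpr (Nat.lt_succ_self _))
      rw [C2_eq_zero_iff] at h0
      omega
    · intro hor j hj
      rw [Finset.mem_range] at hj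
      rw [C2_eq_zero_iff]
      omega
  · simp only [eq_self_iff_true, true_iff]
    omega

lemma mem_cond (a b : ℤ) (h1 : 0 ≤ a) (h2 : 0 ≤ a + b) (h3 : a - 1 < 0 ∨ a + b - 2 < 0)
    (h4 : b ≤ a + 2) (h5 : a ≤ b + 2) :
    H0 a b ≠ 0 ∧ H0 (a - 1) (b - 1) = 0 ∧
      ∀ t : ℤ, H1 (a + t) (b + t) = 0 ∧ H2 (a + t) (b + t) = 0 := by
  refine ⟨?_, ?_, fun t => ⟨?_, ?_⟩⟩
  · rw [Ne, H0_eq_zero_iff]; omega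
  · rw [H0_eq_zero_iff]; omega
  · rw [H1_eq_zero_iff]; omega
  · rw [H2_eq_zero_iff]; omega

theorem initialized_aCM_line_bundles :
    {p : ℤ × ℤ | H0 p.1 p.2 ≠ 0 ∧ H0 (p.1 - 1) (p.2 - 1) = 0 ∧
        ∀ t : ℤ, H1 (p.1 + t) (p.2 + t) = 0 ∧ H2 (p.1 + t) (p.2 + t) = 0} =
      {(0, 0), (0, 1), (0, 2), (1, 0), (1, -1)} := by
  ext ⟨a, b⟩
  simp only [Set.mem_setOf_eq, Set.mem_insert_iff, Set.mem_singleton_iff, Prod.mk.injEq]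
  constructor
  · rintro ⟨h0, h0', hT⟩
    rw [Ne, H0_eq_zero_iff] at h0
    push_neg at h0
    rw [H0_eq_zero_iff] at h0'
    have h1 := (hT (-a - 2)).1
    have h2 := (hT (-a)).2
    rw [H1_eq_zero_iff] at h1
    rw [H2_eq_zero_iff] at h2
    omega
  · rintro (⟨rfl, rfl⟩ | ⟨rfl, rfl⟩ | ⟨rfl, rfl⟩ | ⟨rfl, rfl⟩ | ⟨rfl, rfl⟩) <;>
      exact mem_cond _ _ (by norm_num) (by norm_num) (by norm_num) (by norm_num) (by norm_num)
end
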